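/- Let r = 0 (constant power loads). Under the change of variables x := [V*]^{-1}V − 1 (componentwise x_i = V_i/V*_i − 1), the fixed-point equation x = f(x) with f(x) = −(1/4)·P_cri·[P*_L]·r(x), r(x)_i = 1/(1+x_i), has a unique solution in the closed ball {x ∈ ℝ^N : ‖x‖_∞ ≤ δ₋} provided Δ := ‖P_cri P*_L‖_∞ < 1, where δ₋ ∈ [0, 1/2) is the unique solution in [0,1/2) of Δ = 4δ(1−δ). Moreover f is a contraction on this ball. -/

import Mathlib

/-- Core per-coordinate bound lemma -/
private lemma inv_bound {δm t : ℝ} (hδhalf : δm < 1 / 2) (ht : |t| ≤ δm) :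
    |(1 + t)⁻¹| ≤ (1 - δm)⁻¹ := by
  have h1 : (0:ℝ) < 1 - δm := by linarith
  have h2 : 1 - δm ≤ 1 + t := by
    have := abs_le.mp ht; linarith [this.1]
  have h3 : (0:ℝ) < 1 + t := lt_of_lt_of_le h1 h2
  rw [abs_inv, abs_of_pos h3]
  exact inv_anti₀ h1 h2

/-- For `r = 0` (constant power loads), `f(x) = −(1/4) P_cri [P*_L] r(x)` with
`r(x)ᵢ = 1/(1+xᵢ)` maps the sup-norm ball of radius `δ₋` to itself, is a contraction
there, and has a unique fixed point in that ball, provided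
`Δ = ‖P_cri P*_L‖_∞ < 1` and `δ₋ ∈ [0, 1/2)` solves `Δ = 4δ(1−δ)`. -/
theorem stmt_15 {N : ℕ} (Pcri : Matrix (Fin N) (Fin N) ℝ) (PL : Fin N → ℝ)
    (Δ δm : ℝ) (hΔ : Δ = ⨆ i : Fin N, ∑ j, |Pcri i j * PL j|) (hΔ1 : Δ < 1)
    (hδ0 : 0 ≤ δm) (hδhalf : δm < 1 / 2) (hδeq : Δ = 4 * δm * (1 - δm))
    (f : (Fin N → ℝ) → (Fin N → ℝ))
    (hf : ∀ x, f x = fun i => -(1 / 4) * ∑ j, Pcri i j * (PL j * (1 + x j)⁻¹)) :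
    (∀ x ∈ Metric.closedBall (0 : Fin N → ℝ) δm, f x ∈ Metric.closedBall (0 : Fin N → ℝ) δm) ∧
    (∃ K : ℝ, K < 1 ∧ ∀ x ∈ Metric.closedBall (0 : Fin N → ℝ) δm,
      ∀ y ∈ Metric.closedBall (0 : Fin N → ℝ) δm, ‖f x - f y‖ ≤ K * ‖x - y‖) ∧
    (∃! x : Fin N → ℝ, x ∈ Metric.closedBall (0 : Fin N → ℝ) δm ∧ f x = x) := by
  have h1δ : (0:ℝ) < 1 - δm := by linarith
  have hsum : ∀ i, ∑ j, |Pcri i j * PL j| ≤ Δ := by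
    intro i
    rw [hΔ]
    exact le_ciSup (f := fun i : Fin N => ∑ j, |Pcri i j * PL j|)
      (Set.Finite.bddAbove (Set.finite_range _)) i
  have hmem : ∀ x : Fin N → ℝ, x ∈ Metric.closedBall (0 : Fin N → ℝ) δm → ∀ j, |x j| ≤ δm := by
    intro x hx j
    rw [Metric.mem_closedBall, dist_zero_right] at hx
    exact le_trans (norm_le_pi_norm x j) hx
  -- mapping property
  have hmap : ∀ x ∈ Metric.closedBall (0 : Fin N → ℝ) δm,
      f x ∈ Metric.closedBall (0 : Fin N → ℝ) δm := by
    intro x hx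
    rw [Metric.mem_closedBall, dist_zero_right]
    rw [hf]
    refine pi_norm_le_iff_of_nonneg hδ0 |>.mpr fun i => ?_
    have hb : |∑ j, Pcri i j * (PL j * (1 + x j)⁻¹)| ≤ Δ * (1 - δm)⁻¹ := by
      calc |∑ j, Pcri i j * (PL j * (1 + x j)⁻¹)|
          ≤ ∑ j, |Pcri i j * (PL j * (1 + x j)⁻¹)| := Finset.abs_sum_le_sum_abs _ _
        _ ≤ ∑ j, |Pcri i j * PL j| * (1 - δm)⁻¹ := by
            refine Finset.sum_le_sum fun j _ => ?_
            rw [show Pcri i j * (PL j * (1 + x j)⁻¹) = (Pcri i j * PL j) * (1 + x j)⁻¹ by ring,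
              abs_mul]
            exact mul_le_mul_of_nonneg_left (inv_bound hδhalf (hmem x hx j)) (abs_nonneg _)
        _ = (∑ j, |Pcri i j * PL j|) * (1 - δm)⁻¹ := by rw [Finset.sum_mul]
        _ ≤ Δ * (1 - δm)⁻¹ := mul_le_mul_of_nonneg_right (hsum i) (by positivity)
    have habs : ‖-(1 / 4) * ∑ j, Pcri i j * (PL j * (1 + x j)⁻¹)‖
        ≤ (1/4) * (Δ * (1 - δm)⁻¹) := by
      rw [Real.norm_eq_abs, abs_mul, show |(-(1/4):ℝ)| = 1/4 by norm_num]
      exact mul_le_mul_of_nonneg_left hb (by norm_num)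
    refine habs.trans ?_
    rw [hδeq]
    field_simp
    exact le_rfl
  -- contraction
  have hK0 : 0 ≤ δm / (1 - δm) := div_nonneg hδ0 h1δ.le
  have hK1 : δm / (1 - δm) < 1 := (div_lt_one h1δ).mpr (by linarith)
  have hlip : ∀ x ∈ Metric.closedBall (0 : Fin N → ℝ) δm,
      ∀ y ∈ Metric.closedBall (0 : Fin N → ℝ) δm,
      ‖f x - f y‖ ≤ (δm / (1 - δm)) * ‖x - y‖ := by
    intro x hx y hy
    refine pi_norm_le_iff_of_nonneg (mul_nonneg hK0 (norm_nonneg _)) |>.mpr fun i => ?_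
    have hdiff : (f x - f y) i
        = -(1 / 4) * ∑ j, Pcri i j * PL j * ((1 + x j)⁻¹ - (1 + y j)⁻¹) := by
      simp only [Pi.sub_apply, hf]
      rw [← mul_sub, ← Finset.sum_sub_distrib]
      congr 1
      refine Finset.sum_congr rfl fun j _ => by ring
    have hterm : ∀ j, |(1 + x j)⁻¹ - (1 + y j)⁻¹| ≤ (1 - δm)⁻¹ * (1 - δm)⁻¹ * ‖x - y‖ := by
      intro j
      have hxj : (0:ℝ) < 1 + x j := by
        have := abs_le.mp (hmem x hx j); linarith [this.1]
      have hyj : (0:ℝ) < 1 + y j := by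
        have := abs_le.mp (hmem y hy j); linarith [this.1]
      have hid : (1 + x j)⁻¹ - (1 + y j)⁻¹
          = (1 + x j)⁻¹ * (1 + y j)⁻¹ * (y j - x j) := by
        field_simp
        ring
      rw [hid, abs_mul, abs_mul]
      have h1 := inv_bound hδhalf (hmem x hx j)
      have h2 := inv_bound hδhalf (hmem y hy j)
      have h3 : |y j - x j| ≤ ‖x - y‖ := by
        rw [abs_sub_comm]
        exact le_trans (le_of_eq (by simp [Real.norm_eq_abs])) (norm_le_pi_norm (x - y) j)
      have := mul_le_mul (mul_le_mul h1 h2 (abs_nonneg _) (by positivity)) h3 (abs_nonneg _)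
        (by positivity)
      exact this
    have hb : |∑ j, Pcri i j * PL j * ((1 + x j)⁻¹ - (1 + y j)⁻¹)|
        ≤ Δ * ((1 - δm)⁻¹ * (1 - δm)⁻¹ * ‖x - y‖) := by
      calc |∑ j, Pcri i j * PL j * ((1 + x j)⁻¹ - (1 + y j)⁻¹)|
          ≤ ∑ j, |Pcri i j * PL j * ((1 + x j)⁻¹ - (1 + y j)⁻¹)| :=
            Finset.abs_sum_le_sum_abs _ _
        _ ≤ ∑ j, |Pcri i j * PL j| * ((1 - δm)⁻¹ * (1 - δm)⁻¹ * ‖x - y‖) := by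
            refine Finset.sum_le_sum fun j _ => ?_
            rw [abs_mul]
            exact mul_le_mul_of_nonneg_left (hterm j) (abs_nonneg _)
        _ = (∑ j, |Pcri i j * PL j|) * ((1 - δm)⁻¹ * (1 - δm)⁻¹ * ‖x - y‖) := by
            rw [Finset.sum_mul]
        _ ≤ Δ * ((1 - δm)⁻¹ * (1 - δm)⁻¹ * ‖x - y‖) :=
            mul_le_mul_of_nonneg_right (hsum i) (by positivity)
    rw [hdiff, Real.norm_eq_abs, abs_mul]
    have : |(-(1/4) : ℝ)| = 1/4 := by norm_num
    rw [this]
    calc (1/4) * |∑ j, Pcri i j * PL j * ((1 + x j)⁻¹ - (1 + y j)⁻¹)|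
        ≤ (1/4) * (Δ * ((1 - δm)⁻¹ * (1 - δm)⁻¹ * ‖x - y‖)) := by
          exact mul_le_mul_of_nonneg_left hb (by norm_num)
      _ = δm / (1 - δm) * ‖x - y‖ := by rw [hδeq]; field_simp
  refine ⟨hmap, ⟨δm / (1 - δm), hK1, hlip⟩, ?_⟩
  -- unique fixed point via Banach
  set s := Metric.closedBall (0 : Fin N → ℝ) δm with hs
  have hsc : IsComplete s := Metric.isClosed_closedBall.isComplete
  have hsf : Set.MapsTo f s s := hmap
  set K : NNReal := ⟨δm / (1 - δm), hK0⟩ with hKdef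
  have hcontr : ContractingWith K (hsf.restrict f s s) := by
    constructor
    · exact_mod_cast hK1
    · refine LipschitzWith.of_dist_le_mul fun a b => ?_
      have : dist (hsf.restrict f s s a) (hsf.restrict f s s b) = dist (f a.1) (f b.1) := rfl
      rw [this, Subtype.dist_eq, dist_eq_norm, dist_eq_norm]
      exact hlip a.1 a.2 b.1 b.2
  have h0s : (0 : Fin N → ℝ) ∈ s := Metric.mem_closedBall_self hδ0
  obtain ⟨y, hys, hfy, -, -⟩ :=
    hcontr.exists_fixedPoint' hsc hsf h0s (edist_ne_top _ _)
  refine ⟨y, ⟨hys, hfy⟩, ?_⟩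
  rintro z ⟨hzs, hfz⟩
  by_contra hne
  have hpos : 0 < ‖z - y‖ := by
    rw [norm_pos_iff]
    exact sub_ne_zero.mpr hne
  have := hlip z hzs y hys
  rw [hfz, hfy] at this
  nlinarith [hpos, hK1, this]
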